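/- Let (C•, d) be a finite-dimensional Hilbert cochain complex, i.e. finite-dimensional complex inner product spaces C⁰, …, Cⁿ with linear maps d_p : C^p → C^{p+1} satisfying d_{p+1} ∘ d_p = 0. Let Δ_p = d_p* d_p + d_{p-1} d_{p-1}* be the Laplacians. Then for every t > 0 the McKean–Singer formula holds: Σ_p (−1)^p Tr(exp(−t Δ_p)) = Σ_p (−1)^p dim H^p(C•, d), where H^p = ker d_p / im d_{p−1}. -/

import Mathlib

/-- The Laplacians `Δ_p = d_p* d_p + d_{p-1} d_{p-1}*` of a finite-dimensional Hilbert
cochain complex (with the convention `d_{-1} = 0`). -/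
noncomputable def Lap (C : ℕ → Type) [∀ p, NormedAddCommGroup (C p)]
    [∀ p, InnerProductSpace ℂ (C p)] [∀ p, FiniteDimensional ℂ (C p)]
    (d : ∀ p, C p →ₗ[ℂ] C (p + 1)) : ∀ p, C p →ₗ[ℂ] C p
  | 0 => LinearMap.adjoint (d 0) ∘ₗ d 0
  | (p + 1) => LinearMap.adjoint (d (p + 1)) ∘ₗ d (p + 1) + d p ∘ₗ LinearMap.adjoint (d p)

/-- `dim H^p(C•,d)` where `H^p = ker d_p / im d_{p-1}` (and `H^0 = ker d_0`). -/
noncomputable def hdim (C : ℕ → Type) [∀ p, NormedAddCommGroup (C p)]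
    [∀ p, InnerProductSpace ℂ (C p)] [∀ p, FiniteDimensional ℂ (C p)]
    (d : ∀ p, C p →ₗ[ℂ] C (p + 1)) : ℕ → ℕ
  | 0 => Module.finrank ℂ (LinearMap.ker (d 0))
  | (p + 1) =>
      Module.finrank ℂ
        (↥(LinearMap.ker (d (p + 1))) ⧸
          Submodule.comap (LinearMap.ker (d (p + 1))).subtype (LinearMap.range (d p)))

/-- `Tr (exp (-t T))` for an endomorphism of a finite-dimensional space. -/
noncomputable def heatTr {E : Type} [NormedAddCommGroup E] [InnerProductSpace ℂ E]
    [FiniteDimensional ℂ E] (T : E →ₗ[ℂ] E) (t : ℝ) : ℂ :=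
  LinearMap.trace ℂ E
    (NormedSpace.exp ((-(t : ℂ)) • LinearMap.toContinuousLinearMap T)).toLinearMap

section Aux

open LinearMap Module

variable {E F : Type} [NormedAddCommGroup E] [InnerProductSpace ℂ E] [FiniteDimensional ℂ E]
  [NormedAddCommGroup F] [InnerProductSpace ℂ F] [FiniteDimensional ℂ F]

noncomputable instance : FiniteDimensional ℂ (E →L[ℂ] E) :=
  LinearEquiv.finiteDimensional (LinearMap.toContinuousLinearMap : (E →ₗ[ℂ] E) ≃ₗ[ℂ] _)

/-- trace as a continuous linear functional on continuous endomorphisms. -/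
noncomputable def trCLM (E : Type) [NormedAddCommGroup E] [InnerProductSpace ℂ E]
    [FiniteDimensional ℂ E] : (E →L[ℂ] E) →L[ℂ] ℂ :=
  LinearMap.toContinuousLinearMap (LinearMap.trace ℂ E ∘ₗ ContinuousLinearMap.coeLM ℂ)

/-- The coefficients of the heat trace series. -/
noncomputable def hc (T : E →ₗ[ℂ] E) (t : ℝ) (k : ℕ) : ℂ :=
  ((k.factorial : ℂ))⁻¹ * ((-(t : ℂ)) ^ k * LinearMap.trace ℂ E (T ^ k))

lemma trCLM_apply (M : E →L[ℂ] E) : trCLM E M = LinearMap.trace ℂ E (M : E →ₗ[ℂ] E) := rfl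

lemma hasSum_heatTr (T : E →ₗ[ℂ] E) (t : ℝ) : HasSum (hc T t) (heatTr T t) := by
  set M : E →L[ℂ] E := (-(t : ℂ)) • LinearMap.toContinuousLinearMap T with hM
  have h := NormedSpace.exp_series_hasSum_exp' (𝕂 := ℂ) M
  have h2 := (trCLM E).hasSum h
  have he : heatTr T t = trCLM E (NormedSpace.exp M) := rfl
  rw [he]
  convert h2 using 2 with k
  have hpow : M ^ k = ((-(t : ℂ)) ^ k) • (LinearMap.toContinuousLinearMap T) ^ k := by
    rw [hM, smul_pow]
  have hcoe : (((LinearMap.toContinuousLinearMap T) ^ k : E →L[ℂ] E) : E →ₗ[ℂ] E) = T ^ k := by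
    have h1 : (((LinearMap.toContinuousLinearMap T) ^ k : E →L[ℂ] E) : E →ₗ[ℂ] E)
        = (((LinearMap.toContinuousLinearMap T : E →L[ℂ] E) : E →ₗ[ℂ] E)) ^ k :=
      map_pow (ContinuousLinearMap.toLinearMapRingHom (R₁ := ℂ) (M₁ := E)) _ k
    rw [h1, LinearMap.coe_toContinuousLinearMap]
  rw [map_smul, smul_eq_mul, hc]
  congr 1
  rw [trCLM_apply, hpow, ContinuousLinearMap.coe_smul, map_smul, hcoe, smul_eq_mul]

/-- Reduced heat trace: the `k ≥ 1` part of the heat trace series. -/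
noncomputable def redTr (T : E →ₗ[ℂ] E) (t : ℝ) : ℂ := ∑' k, hc T t (k + 1)

lemma summable_hc (T : E →ₗ[ℂ] E) (t : ℝ) : Summable (hc T t) := (hasSum_heatTr T t).summable

lemma summable_hc' (T : E →ₗ[ℂ] E) (t : ℝ) : Summable (fun k => hc T t (k + 1)) :=
  (summable_nat_add_iff 1).mpr (summable_hc T t)

lemma heatTr_split (T : E →ₗ[ℂ] E) (t : ℝ) :
    heatTr T t = (Module.finrank ℂ E : ℂ) + redTr T t := by
  have := (hasSum_heatTr T t).tsum_eq
  rw [← this, Summable.tsum_eq_zero_add (summable_hc T t)]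
  congr 1
  simp [hc, LinearMap.trace_one]

lemma redTr_zero (t : ℝ) : redTr (0 : E →ₗ[ℂ] E) t = 0 := by
  have : ∀ k, hc (0 : E →ₗ[ℂ] E) t (k + 1) = 0 := by
    intro k; simp [hc, zero_pow (Nat.succ_ne_zero k)]
  simp [redTr, this]

lemma pow_comp_eq (f : E →ₗ[ℂ] F) (g : F →ₗ[ℂ] E) (k : ℕ) :
    (g ∘ₗ f) ^ (k + 1) = g ∘ₗ (((f ∘ₗ g) ^ k) ∘ₗ f) := by
  induction k with
  | zero => simp [pow_one, Module.End.one_eq_id]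
  | succ k ih =>
      rw [pow_succ', ih, pow_succ']
      simp only [Module.End.mul_eq_comp, LinearMap.comp_assoc]

lemma trace_pow_comm (f : E →ₗ[ℂ] F) (g : F →ₗ[ℂ] E) (k : ℕ) :
    LinearMap.trace ℂ E ((g ∘ₗ f) ^ (k + 1)) = LinearMap.trace ℂ F ((f ∘ₗ g) ^ (k + 1)) := by
  rw [pow_comp_eq, LinearMap.trace_comp_comm', pow_succ]
  rfl

lemma redTr_cyclic (f : E →ₗ[ℂ] F) (g : F →ₗ[ℂ] E) (t : ℝ) :
    redTr (g ∘ₗ f) t = redTr (f ∘ₗ g) t := by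
  unfold redTr
  congr 1; funext k
  simp [hc, trace_pow_comm f g k]

lemma pow_add_of_mul_zero (A B : E →ₗ[ℂ] E) (hAB : A ∘ₗ B = 0) (hBA : B ∘ₗ A = 0) (k : ℕ) :
    (A + B) ^ (k + 1) = A ^ (k + 1) + B ^ (k + 1) := by
  have hAB' : A * B = 0 := hAB
  have hBA' : B * A = 0 := hBA
  induction k with
  | zero => simp
  | succ k ih =>
      rw [pow_succ, ih, add_mul, mul_add, mul_add]
      have h1 : A ^ (k + 1) * B = 0 := by
        rw [pow_succ, mul_assoc, hAB', mul_zero]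
      have h2 : B ^ (k + 1) * A = 0 := by
        rw [pow_succ, mul_assoc, hBA', mul_zero]
      rw [h1, h2, ← pow_succ, ← pow_succ]
      simp

lemma redTr_add (A B : E →ₗ[ℂ] E) (hAB : A ∘ₗ B = 0) (hBA : B ∘ₗ A = 0) (t : ℝ) :
    redTr (A + B) t = redTr A t + redTr B t := by
  unfold redTr
  rw [← Summable.tsum_add (summable_hc' A t) (summable_hc' B t)]
  congr 1; funext k
  simp only [hc, pow_add_of_mul_zero A B hAB hBA k, map_add]
  ring

/-- alternating-sum telescoping -/
lemma tele (f g : ℕ → ℂ) (hg0 : g 0 = 0) (hgs : ∀ p, g (p + 1) = f p) (n : ℕ) :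
    ∑ p ∈ Finset.range (n + 1), (-1 : ℂ) ^ p * (f p + g p) = (-1) ^ n * f n := by
  induction n with
  | zero => simp [hg0]
  | succ n ih =>
      rw [Finset.sum_range_succ, ih, hgs]
      ring

end Aux

/-- McKean–Singer: for a finite-dimensional Hilbert cochain complex
`0 → C⁰ → ⋯ → Cⁿ → 0` and every `t > 0`,
`Σ_p (-1)^p Tr(exp(-t Δ_p)) = Σ_p (-1)^p dim H^p`. -/
theorem mcKean_singer (n : ℕ) (C : ℕ → Type) [∀ p, NormedAddCommGroup (C p)]
    [∀ p, InnerProductSpace ℂ (C p)] [∀ p, FiniteDimensional ℂ (C p)]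
    (d : ∀ p, C p →ₗ[ℂ] C (p + 1))
    (hd : ∀ p, d (p + 1) ∘ₗ d p = 0)
    (htriv : ∀ p, n < p → Module.finrank ℂ (C p) = 0)
    (t : ℝ) (ht : 0 < t) :
    ∑ p ∈ Finset.range (n + 1), (-1 : ℂ) ^ p * heatTr (Lap C d p) t =
      ∑ p ∈ Finset.range (n + 1), (-1 : ℂ) ^ p * (hdim C d p : ℂ) := by
  classical
  have hsub : Subsingleton (C (n + 1)) :=
    Module.finrank_zero_iff.mp (htriv (n + 1) (by omega))
  have hdn : d n = 0 := by ext x; exact Subsingleton.elim _ _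
  -- heat side
  set F : ℕ → ℂ := fun p => redTr (LinearMap.adjoint (d p) ∘ₗ d p) t with hF
  set G : ℕ → ℂ := fun p => Nat.rec 0 (fun q _ => F q) p with hG
  have hG0 : G 0 = 0 := rfl
  have hGs : ∀ p, G (p + 1) = F p := fun p => rfl
  have hde : ∀ p (x : C p), d (p + 1) (d p x) = 0 := by
    intro p x
    have := LinearMap.ext_iff.mp (hd p) x
    simpa using this
  have hLap : ∀ p, heatTr (Lap C d p) t
      = (Module.finrank ℂ (C p) : ℂ) + (F p + G p) := by
    intro p
    cases p with
    | zero =>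
        rw [show Lap C d 0 = LinearMap.adjoint (d 0) ∘ₗ d 0 from rfl, heatTr_split]
        simp [hF, hG0]
    | succ p =>
        have hadj : LinearMap.adjoint (d p) ∘ₗ LinearMap.adjoint (d (p + 1)) = 0 := by
          rw [← LinearMap.adjoint_comp, hd p, map_zero]
        have hAB : (LinearMap.adjoint (d (p + 1)) ∘ₗ d (p + 1)) ∘ₗ
            (d p ∘ₗ LinearMap.adjoint (d p)) = 0 := by
          ext x
          simp [LinearMap.comp_apply, hde p]
        have hBA : (d p ∘ₗ LinearMap.adjoint (d p)) ∘ₗ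
            (LinearMap.adjoint (d (p + 1)) ∘ₗ d (p + 1)) = 0 := by
          ext x
          have := LinearMap.ext_iff.mp hadj (d (p + 1) x)
          simp only [LinearMap.comp_apply, LinearMap.zero_apply] at this ⊢
          rw [this, map_zero]
        rw [show Lap C d (p + 1)
              = (LinearMap.adjoint (d (p + 1)) ∘ₗ d (p + 1))
                + (d p ∘ₗ LinearMap.adjoint (d p)) from rfl,
            heatTr_split, redTr_add _ _ hAB hBA,
            redTr_cyclic (LinearMap.adjoint (d p)) (d p)]
  have hFn : F n = 0 := by
    rw [hF]
    simp only [hdn, map_zero, LinearMap.comp_zero, LinearMap.zero_comp]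
    exact redTr_zero t
  have hheat : ∑ p ∈ Finset.range (n + 1), (-1 : ℂ) ^ p * heatTr (Lap C d p) t
      = ∑ p ∈ Finset.range (n + 1), (-1 : ℂ) ^ p * (Module.finrank ℂ (C p) : ℂ) := by
    calc ∑ p ∈ Finset.range (n + 1), (-1 : ℂ) ^ p * heatTr (Lap C d p) t
        = ∑ p ∈ Finset.range (n + 1),
            ((-1 : ℂ) ^ p * (Module.finrank ℂ (C p) : ℂ)
              + (-1 : ℂ) ^ p * (F p + G p)) := by
          refine Finset.sum_congr rfl fun p _ => ?_
          rw [hLap p]; ring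
      _ = ∑ p ∈ Finset.range (n + 1), (-1 : ℂ) ^ p * (Module.finrank ℂ (C p) : ℂ)
            + ∑ p ∈ Finset.range (n + 1), (-1 : ℂ) ^ p * (F p + G p) :=
          Finset.sum_add_distrib
      _ = ∑ p ∈ Finset.range (n + 1), (-1 : ℂ) ^ p * (Module.finrank ℂ (C p) : ℂ) := by
          rw [tele F G hG0 hGs n, hFn, mul_zero, add_zero]
  -- cohomology side
  set R : ℕ → ℂ := fun p => (Module.finrank ℂ (LinearMap.range (d p)) : ℂ) with hR
  set K : ℕ → ℂ := fun p => (Module.finrank ℂ (LinearMap.ker (d p)) : ℂ) with hK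
  have hrk : ∀ p, (Module.finrank ℂ (C p) : ℂ) = K p + R p := by
    intro p
    have h := LinearMap.finrank_range_add_finrank_ker (d p)
    show (Module.finrank ℂ (C p) : ℂ)
      = (Module.finrank ℂ (LinearMap.ker (d p)) : ℂ)
        + (Module.finrank ℂ (LinearMap.range (d p)) : ℂ)
    norm_cast
    omega
  have hle : ∀ p, LinearMap.range (d p) ≤ LinearMap.ker (d (p + 1)) := by
    intro p y hy
    obtain ⟨x, rfl⟩ := hy
    exact hde p x
  have hq : ∀ p, (hdim C d (p + 1) : ℂ) = K (p + 1) - R p := by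
    intro p
    have e := Submodule.comapSubtypeEquivOfLe (hle p)
    have hcr : Module.finrank ℂ
        (Submodule.comap (LinearMap.ker (d (p + 1))).subtype (LinearMap.range (d p)))
        = Module.finrank ℂ (LinearMap.range (d p)) := e.finrank_eq
    have hquot := Submodule.finrank_quotient_add_finrank
      (Submodule.comap (LinearMap.ker (d (p + 1))).subtype (LinearMap.range (d p)))
    rw [hcr] at hquot
    have : (hdim C d (p + 1) : ℂ) + R p = K (p + 1) := by
      rw [hR, hK, ← Nat.cast_add, show hdim C d (p + 1)
        = Module.finrank ℂ
            (↥(LinearMap.ker (d (p + 1))) ⧸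
              Submodule.comap (LinearMap.ker (d (p + 1))).subtype
                (LinearMap.range (d p))) from rfl, hquot]
    linear_combination this
  have hRn : R n = 0 := by
    show (Module.finrank ℂ (LinearMap.range (d n)) : ℂ) = 0
    rw [hdn]
    simp
  set G' : ℕ → ℂ := fun p => Nat.rec 0 (fun q _ => R q) p with hG'
  have hdiff : ∀ p, (Module.finrank ℂ (C p) : ℂ) - (hdim C d p : ℂ) = R p + G' p := by
    intro p
    cases p with
    | zero =>
        have h0 : (hdim C d 0 : ℂ) = K 0 := rfl
        rw [hrk 0, h0]
        show K 0 + R 0 - K 0 = R 0 + 0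
        ring
    | succ p =>
        rw [hrk (p + 1), hq p]
        show K (p + 1) + R (p + 1) - (K (p + 1) - R p) = R (p + 1) + R p
        ring
  have hcoh : ∑ p ∈ Finset.range (n + 1), (-1 : ℂ) ^ p * (Module.finrank ℂ (C p) : ℂ)
      = ∑ p ∈ Finset.range (n + 1), (-1 : ℂ) ^ p * (hdim C d p : ℂ) := by
    have htel := tele R G' rfl (fun p => rfl) n
    have : ∑ p ∈ Finset.range (n + 1),
        (-1 : ℂ) ^ p * ((Module.finrank ℂ (C p) : ℂ) - (hdim C d p : ℂ)) = 0 := by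
      calc ∑ p ∈ Finset.range (n + 1),
            (-1 : ℂ) ^ p * ((Module.finrank ℂ (C p) : ℂ) - (hdim C d p : ℂ))
          = ∑ p ∈ Finset.range (n + 1), (-1 : ℂ) ^ p * (R p + G' p) := by
            refine Finset.sum_congr rfl fun p _ => ?_
            rw [hdiff p]
        _ = (-1 : ℂ) ^ n * R n := htel
        _ = 0 := by rw [hRn, mul_zero]
    have hsplit : ∑ p ∈ Finset.range (n + 1),
        (-1 : ℂ) ^ p * ((Module.finrank ℂ (C p) : ℂ) - (hdim C d p : ℂ))
        = ∑ p ∈ Finset.range (n + 1), (-1 : ℂ) ^ p * (Module.finrank ℂ (C p) : ℂ)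
          - ∑ p ∈ Finset.range (n + 1), (-1 : ℂ) ^ p * (hdim C d p : ℂ) := by
      rw [← Finset.sum_sub_distrib]
      refine Finset.sum_congr rfl fun p _ => ?_
      ring
    rw [hsplit] at this
    linear_combination this
  rw [hheat, hcoh]
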